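/- A dynamical system (X,T) is equicontinuous if and only if the regionally proximal relation Q(X,T) is trivial, i.e., Q(X,T) = Δ_X. -/

import Mathlib

open Filter Topology

variable {X : Type*} [MetricSpace X]

/-- `(x,y)` is regionally proximal. -/
def RegProximal (T : X → X) (x y : X) : Prop :=
  ∀ ε > (0 : ℝ), ∃ (x' y' : X) (n : ℕ),
    dist x x' < ε ∧ dist y y' < ε ∧ dist (T^[n] x') (T^[n] y') < ε

/-- `(X,T)` is equicontinuous. -/
def Equicontinuous' (T : X → X) : Prop :=
  ∀ ε > (0 : ℝ), ∃ δ > (0 : ℝ), ∀ x y : X, dist x y < δ →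
    ∀ n : ℕ, dist (T^[n] x) (T^[n] y) < ε

private lemma exists_close_pair {Y : Type*} [MetricSpace Y] [CompactSpace Y]
    (c : ℕ → Y) {ε : ℝ} (hε : 0 < ε) :
    ∃ j j' : ℕ, j < j' ∧ dist (c j) (c j') < ε := by
  obtain ⟨p, -, φ, hφ, hlim⟩ := isCompact_univ.tendsto_subseq (fun n => Set.mem_univ (c n))
  obtain ⟨K, hK⟩ := (Metric.tendsto_atTop.mp hlim) (ε / 2) (by linarith)
  refine ⟨φ K, φ (K + 1), hφ (Nat.lt_succ_self K), ?_⟩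
  have h1 := hK K le_rfl
  have h2 := hK (K + 1) (Nat.le_succ K)
  simp only [Function.comp] at h1 h2
  calc dist (c (φ K)) (c (φ (K + 1)))
      ≤ dist (c (φ K)) p + dist (c (φ (K + 1))) p := dist_triangle_right _ _ _
    _ < ε / 2 + ε / 2 := add_lt_add h1 h2
    _ = ε := by ring

private lemma forward_dir {Y : Type*} [MetricSpace Y] [CompactSpace Y] (T : Y → Y)
    (hsurj : Function.Surjective T) (heq : Equicontinuous' T) :
    ∀ x y : Y, RegProximal T x y → x = y := by
  intro x y hxy
  by_contra hne
  have hd : 0 < dist x y := dist_pos.mpr hne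
  set ε1 : ℝ := dist x y / 8 with hε1
  have hε1pos : 0 < ε1 := by positivity
  obtain ⟨δ1, hδ1pos, hδ1⟩ := heq ε1 hε1pos
  set η := min δ1 ε1 with hη
  have hηpos : 0 < η := lt_min hδ1pos hε1pos
  obtain ⟨x', y', n, h1, h2, h3⟩ := hxy η hηpos
  set S : Y → Y := fun z => (hsurj z).choose with hS
  have hTS : Function.LeftInverse T S := fun z => (hsurj z).choose_spec
  have hTSn : ∀ m : ℕ, ∀ z : Y, T^[m] (S^[m] z) = z := fun m => hTS.iterate m
  obtain ⟨j, j', hjj', hclose⟩ :=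
    exists_close_pair (fun i => ((S^[i * (n+1)] x' : Y), (S^[i * (n+1)] y' : Y))) hδ1pos
  set A := j * (n + 1) with hA
  set B := j' * (n + 1) with hB
  have hAB : A ≤ B := Nat.mul_le_mul_right _ hjj'.le
  have hBA : B - A = (j' - j) * (n + 1) := by rw [hA, hB, Nat.sub_mul]
  have hnN : n < B - A := by
    have h1' : 1 * (n + 1) ≤ (j' - j) * (n + 1) :=
      Nat.mul_le_mul_right _ (by omega)
    omega
  set N := B - A with hN
  rw [Prod.dist_eq] at hclose
  have hcx : dist (S^[A] x') (S^[B] x') < δ1 :=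
    lt_of_le_of_lt (le_max_left _ _) hclose
  have hcy : dist (S^[A] y') (S^[B] y') < δ1 :=
    lt_of_le_of_lt (le_max_right _ _) hclose
  have eB : ∀ z : Y, T^[B] (S^[A] z) = T^[N] z := by
    intro z
    have : B = N + A := by omega
    rw [this, Function.iterate_add_apply, hTSn A z]
  have key1 : dist x' (T^[N] x') < ε1 := by
    have h := hδ1 _ _ hcx B
    rw [eB x', hTSn B x'] at h
    simpa [dist_comm] using h
  have key2 : dist y' (T^[N] y') < ε1 := by
    have h := hδ1 _ _ hcy B
    rw [eB y', hTSn B y'] at h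
    simpa [dist_comm] using h
  have h3' : dist (T^[n] x') (T^[n] y') < δ1 := lt_of_lt_of_le h3 (min_le_left _ _)
  have key3 : dist (T^[N] x') (T^[N] y') < ε1 := by
    have h := hδ1 _ _ h3' (N - n)
    rw [← Function.iterate_add_apply, ← Function.iterate_add_apply,
      show N - n + n = N by omega] at h
    exact h
  have ht1 : dist x y ≤ dist x (T^[N] x') + dist (T^[N] x') (T^[N] y') + dist (T^[N] y') y :=
    dist_triangle4 _ _ _ _
  have ht2 : dist x (T^[N] x') ≤ dist x x' + dist x' (T^[N] x') := dist_triangle _ _ _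
  have ht3 : dist (T^[N] y') y ≤ dist (T^[N] y') y' + dist y' y := dist_triangle _ _ _
  have hcomm1 : dist (T^[N] y') y' = dist y' (T^[N] y') := dist_comm _ _
  have hcomm2 : dist y' y = dist y y' := dist_comm _ _
  have hηε : η ≤ ε1 := min_le_right _ _
  have : dist x y < 5 * ε1 := by linarith
  rw [hε1] at this
  linarith

private noncomputable def supDist {Y : Type*} [MetricSpace Y] (S : Y → Y) (p q : Y) : ℝ :=
  ⨆ n : ℕ, dist (S^[n] p) (S^[n] q)

private lemma supDist_bdd {Y : Type*} [MetricSpace Y] [CompactSpace Y] (S : Y → Y) (p q : Y) :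
    BddAbove (Set.range fun n : ℕ => dist (S^[n] p) (S^[n] q)) := by
  obtain ⟨C, hC⟩ := Metric.isBounded_iff.mp (isCompact_univ : IsCompact (Set.univ : Set Y)).isBounded
  exact ⟨C, by rintro _ ⟨n, rfl⟩; exact hC (Set.mem_univ _) (Set.mem_univ _)⟩

private lemma le_supDist {Y : Type*} [MetricSpace Y] [CompactSpace Y] (S : Y → Y) (p q : Y)
    (n : ℕ) : dist (S^[n] p) (S^[n] q) ≤ supDist S p q :=
  le_ciSup (supDist_bdd S p q) n

private lemma dist_le_supDist {Y : Type*} [MetricSpace Y] [CompactSpace Y] (S : Y → Y)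
    (p q : Y) : dist p q ≤ supDist S p q := by
  simpa using le_supDist S p q 0

private lemma supDist_le {Y : Type*} [MetricSpace Y] (S : Y → Y) {p q : Y} {c : ℝ}
    (h : ∀ n : ℕ, dist (S^[n] p) (S^[n] q) ≤ c) : supDist S p q ≤ c :=
  ciSup_le h

private lemma supDist_comm {Y : Type*} [MetricSpace Y] (S : Y → Y) (p q : Y) :
    supDist S p q = supDist S q p := by
  have h : (fun n : ℕ => dist (S^[n] p) (S^[n] q)) = fun n : ℕ => dist (S^[n] q) (S^[n] p) :=
    funext fun n => dist_comm _ _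
  unfold supDist
  rw [h]

private lemma supDist_triangle {Y : Type*} [MetricSpace Y] [CompactSpace Y] (S : Y → Y)
    (p q r : Y) : supDist S p r ≤ supDist S p q + supDist S q r :=
  supDist_le S fun n => (dist_triangle _ _ _).trans
    (add_le_add (le_supDist S p q n) (le_supDist S q r n))

private lemma backward_dir {Y : Type*} [MetricSpace Y] [CompactSpace Y] (T : Y → Y)
    (hsurj : Function.Surjective T)
    (H : ∀ x y : Y, RegProximal T x y → x = y) : Equicontinuous' T := by
  -- Property P : close at some forward time implies close now.
  have P : ∀ ε : ℝ, 0 < ε → ∃ δ > (0:ℝ), ∀ u v : Y, ∀ m : ℕ,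
      dist (T^[m] u) (T^[m] v) < δ → dist u v < ε := by
    intro ε hε
    by_contra hcon
    push_neg at hcon
    have hsel : ∀ k : ℕ, ∃ u v : Y, ∃ m : ℕ,
        dist (T^[m] u) (T^[m] v) < 1/(k+1) ∧ ε ≤ dist u v := by
      intro k
      obtain ⟨u, v, m, h1, h2⟩ := hcon (1/(k+1)) (by positivity)
      exact ⟨u, v, m, h1, h2⟩
    choose u v m hm hd using hsel
    obtain ⟨p, -, φ, hφ, hlim⟩ := isCompact_univ.tendsto_subseq
      (x := fun k => ((u k : Y), (v k : Y))) (fun n => Set.mem_univ _)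
    have l1 : Tendsto (fun k => u (φ k)) atTop (𝓝 p.1) := by
      have := (continuous_fst.tendsto p).comp hlim
      simpa [Function.comp_def] using this
    have l2 : Tendsto (fun k => v (φ k)) atTop (𝓝 p.2) := by
      have := (continuous_snd.tendsto p).comp hlim
      simpa [Function.comp_def] using this
    have hab : ε ≤ dist p.1 p.2 :=
      ge_of_tendsto (l1.dist l2) (Filter.Eventually.of_forall fun k => hd (φ k))
    have hreg : RegProximal T p.1 p.2 := by
      intro ε' hε'
      obtain ⟨k0, hk0⟩ := exists_nat_one_div_lt hε'
      obtain ⟨K1, hK1⟩ := Metric.tendsto_atTop.mp l1 ε' hε'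
      obtain ⟨K2, hK2⟩ := Metric.tendsto_atTop.mp l2 ε' hε'
      set k := max k0 (max K1 K2) with hk
      refine ⟨u (φ k), v (φ k), m (φ k), ?_, ?_, ?_⟩
      · rw [dist_comm]; exact hK1 k (le_trans (le_max_left _ _) (le_max_right _ _))
      · rw [dist_comm]; exact hK2 k (le_trans (le_max_right _ _) (le_max_right _ _))
      · refine lt_of_lt_of_le (hm (φ k)) (le_trans ?_ hk0.le)
        have hφk : k0 ≤ φ k := le_trans (le_max_left _ _) (hφ.le_apply)
        apply one_div_le_one_div_of_le (by positivity)
        have hc : (k0 : ℝ) ≤ (φ k : ℝ) := Nat.cast_le.mpr hφk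
        linarith
    have := H _ _ hreg
    rw [this, dist_self] at hab
    linarith
  -- T is injective, with two-sided inverse S.
  have hinj : Function.Injective T := by
    intro a b hab
    by_contra hne
    obtain ⟨δ, hδpos, hδ⟩ := P (dist a b) (dist_pos.mpr hne)
    have h1 : dist (T^[1] a) (T^[1] b) < δ := by
      simpa [Function.iterate_one, hab] using hδpos
    exact lt_irrefl _ (hδ a b 1 h1)
  set S : Y → Y := fun z => (hsurj z).choose with hS
  have hTS : Function.LeftInverse T S := fun z => (hsurj z).choose_spec
  have hST : Function.LeftInverse S T := fun z => hinj (by rw [hTS (T z)])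
  have hTSn : ∀ m : ℕ, ∀ z : Y, T^[m] (S^[m] z) = z := fun m => hTS.iterate m
  have hSTn : ∀ m : ℕ, ∀ z : Y, S^[m] (T^[m] z) = z := fun m => hST.iterate m
  set D : Y → Y → ℝ := supDist S with hD
  -- uniform equivalence : d small ⇒ D small
  have hDequiv : ∀ ε : ℝ, 0 < ε → ∃ δ > (0:ℝ), ∀ p q : Y, dist p q < δ → D p q < ε := by
    intro ε hε
    obtain ⟨δ, hδpos, hδ⟩ := P (ε/2) (by linarith)
    refine ⟨δ, hδpos, fun p q h => ?_⟩
    have hle : D p q ≤ ε/2 := by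
      refine supDist_le S fun n => le_of_lt (hδ _ _ n ?_)
      rw [hTSn n p, hTSn n q]
      exact h
    linarith
  -- T is D-noncontracting
  have hDmono : ∀ p q : Y, D p q ≤ D (T p) (T q) := by
    intro p q
    refine supDist_le S fun n => ?_
    have e : dist (S^[n] p) (S^[n] q) = dist (S^[n+1] (T p)) (S^[n+1] (T q)) := by
      rw [Function.iterate_succ_apply, Function.iterate_succ_apply, hST p, hST q]
    rw [e]
    exact le_supDist S (T p) (T q) (n+1)
  have hDmonoIter : ∀ (k : ℕ) (p q : Y), D p q ≤ D (T^[k] p) (T^[k] q) := by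
    intro k
    induction k with
    | zero => intro p q; simp
    | succ k ih =>
      intro p q
      calc D p q ≤ D (T^[k] p) (T^[k] q) := ih p q
        _ ≤ D (T (T^[k] p)) (T (T^[k] q)) := hDmono _ _
        _ = D (T^[k+1] p) (T^[k+1] q) := by
            rw [Function.iterate_succ_apply', Function.iterate_succ_apply']
  -- T is a D-isometry
  have hDiso : ∀ p q : Y, D (T p) (T q) ≤ D p q := by
    intro p q
    refine le_of_forall_pos_le_add fun ε hε => ?_
    obtain ⟨δ, hδpos, hδD⟩ := hDequiv (ε/2) (by linarith)
    obtain ⟨j, j', hjj', hclose⟩ :=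
      exists_close_pair (fun i => ((T^[i] p : Y), (T^[i] q : Y))) hδpos
    rw [Prod.dist_eq] at hclose
    set k := j' - j with hk
    have hk1 : 1 ≤ k := by omega
    have hjk : j + k = j' := by omega
    have hDp : D p (T^[k] p) < ε/2 := by
      have h1 : dist (T^[j] p) (T^[j'] p) < δ := lt_of_le_of_lt (le_max_left _ _) hclose
      have h2 := hδD _ _ h1
      refine lt_of_le_of_lt ?_ h2
      have h3 := hDmonoIter j p (T^[k] p)
      rwa [← Function.iterate_add_apply, hjk] at h3
    have hDq : D q (T^[k] q) < ε/2 := by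
      have h1 : dist (T^[j] q) (T^[j'] q) < δ := lt_of_le_of_lt (le_max_right _ _) hclose
      have h2 := hδD _ _ h1
      refine lt_of_le_of_lt ?_ h2
      have h3 := hDmonoIter j q (T^[k] q)
      rwa [← Function.iterate_add_apply, hjk] at h3
    have step : D (T p) (T q) ≤ D (T^[k] p) (T^[k] q) := by
      have h3 := hDmonoIter (k-1) (T p) (T q)
      rwa [← Function.iterate_succ_apply, ← Function.iterate_succ_apply,
        show (k-1).succ = k from by omega] at h3
    have t1 : D (T^[k] p) (T^[k] q) ≤ D (T^[k] p) p + D p (T^[k] q) := supDist_triangle _ _ _ _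
    have t2 : D p (T^[k] q) ≤ D p q + D q (T^[k] q) := supDist_triangle _ _ _ _
    have hsymm : D (T^[k] p) p = D p (T^[k] p) := supDist_comm _ _ _
    linarith
  have hDisoIter : ∀ (n : ℕ) (p q : Y), D (T^[n] p) (T^[n] q) ≤ D p q := by
    intro n
    induction n with
    | zero => intro p q; simp
    | succ n ih =>
      intro p q
      calc D (T^[n+1] p) (T^[n+1] q) = D (T^[n] (T p)) (T^[n] (T q)) := by
            rw [Function.iterate_succ_apply, Function.iterate_succ_apply]
        _ ≤ D (T p) (T q) := ih _ _
        _ ≤ D p q := hDiso _ _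
  -- conclude
  intro ε hε
  obtain ⟨δ, hδpos, hδD⟩ := hDequiv ε hε
  refine ⟨δ, hδpos, fun p q h n => ?_⟩
  calc dist (T^[n] p) (T^[n] q) ≤ D (T^[n] p) (T^[n] q) := dist_le_supDist S _ _
    _ ≤ D p q := hDisoIter n p q
    _ < ε := hδD p q h

/-- a dynamical system `(X,T)` is equicontinuous iff the regionally
proximal relation `Q(X,T)` is trivial, i.e. `Q(X,T) = Δ_X`. -/
theorem stmt_8 {Y : Type*} [MetricSpace Y] [CompactSpace Y] (T : Y → Y)
    (hT : Continuous T) (hsurj : Function.Surjective T) :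
    Equicontinuous' T ↔ (∀ x y : Y, RegProximal T x y → x = y) :=
  ⟨fun h => forward_dir T hsurj h, fun h => backward_dir T hsurj h⟩
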